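/- Let K ⊆ ℝⁿ be a convex body with centroid at the origin. Then a_n·E(K) ⊆ K ⊆ b_n·E(K), where E(K) is the Binet–Legendre ellipsoid of K, a_n = 2^{-n/2-1}·n^{-3n/4-3/2}, and b_n = 2^{n/2+1}·n^{3n/4+3/2}. -/

import Mathlib

open Set Metric Pointwise MeasureTheory

/-- The centroid (center of mass) of a set `K ⊆ ℝⁿ`. -/
noncomputable def centroid {n : ℕ} (K : Set (EuclideanSpace ℝ (Fin n))) :
    EuclideanSpace ℝ (Fin n) :=
  (volume K).toReal⁻¹ • ∫ x in K, x

/-- The Binet–Legendre ellipsoid of a centered convex body `K ⊆ ℝⁿ`. -/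
def binetLegendre {n : ℕ} (K : Set (EuclideanSpace ℝ (Fin n))) :
    Set (EuclideanSpace ℝ (Fin n)) :=
  {x | ∀ φ : EuclideanSpace ℝ (Fin n) →ₗ[ℝ] ℝ,
    ((n : ℝ) + 2) / (volume K).toReal * ∫ y in K, (φ y) ^ 2 ≤ 1 → φ x ≤ 1}

/-- `aConst n = 2^(-n/2-1) * n^(-3n/4-3/2)`. -/
noncomputable def aConst (n : ℕ) : ℝ :=
  (2 : ℝ) ^ (-(n : ℝ) / 2 - 1) * (n : ℝ) ^ (-(3 * (n : ℝ)) / 4 - 3 / 2)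

/-- `bConst n = 2^(n/2+1) * n^(3n/4+3/2)`. -/
noncomputable def bConst (n : ℕ) : ℝ :=
  (2 : ℝ) ^ ((n : ℝ) / 2 + 1) * (n : ℝ) ^ (3 * (n : ℝ) / 4 + 3 / 2)

lemma aux_pow_sub_pow (k : ℕ) {a b : ℝ} (hb : 0 ≤ b) (hba : b ≤ a) :
    a^(k+1) - b^(k+1) ≤ (k+1) * a^k * (a - b) := by
  induction k with
  | zero => simp
  | succ k ih =>
    have ha : 0 ≤ a := hb.trans hba
    have hpow : b^(k+1) ≤ a^(k+1) := pow_le_pow_left₀ hb hba _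
    have h1 : a^(k+2) - b^(k+2) = a * (a^(k+1) - b^(k+1)) + b^(k+1) * (a - b) := by ring
    have h2 : a * (a^(k+1) - b^(k+1)) ≤ a * ((k+1) * a^k * (a-b)) :=
      mul_le_mul_of_nonneg_left ih ha
    have h3 : b^(k+1) * (a-b) ≤ a^(k+1) * (a-b) :=
      mul_le_mul_of_nonneg_right hpow (by linarith)
    calc a^(k+2) - b^(k+2) = a * (a^(k+1) - b^(k+1)) + b^(k+1) * (a - b) := h1
      _ ≤ a * ((k+1) * a^k * (a-b)) + a^(k+1) * (a - b) := by linarith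
      _ = ((k:ℝ)+2) * a^(k+1) * (a-b) := by ring
      _ = (↑(k+1)+1) * a^(k+1) * (a-b) := by push_cast; ring

lemma aux_alg (k : ℕ) {M m : ℝ} (hM : 0 < M) (hm : 0 < m) :
    (M+m) * (1 - (m/(M+m))^(k+1)) ≤ (k+1) * M := by
  have ha : (0:ℝ) < M + m := by linarith
  have h2 : (M+m) * (1 - (m/(M+m))^(k+1)) = ((M+m)^(k+1) - m^(k+1))/(M+m)^k := by
    rw [div_pow, eq_div_iff (pow_ne_zero _ ha.ne')]
    field_simp
    ring
  rw [h2, div_le_iff₀ (pow_pos ha k)]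
  have := aux_pow_sub_pow k hm.le (by linarith : m ≤ M + m)
  refine this.trans_eq ?_
  push_cast
  ring

variable {n : ℕ} {K : Set (EuclideanSpace ℝ (Fin n))}

lemma homothety_image_subset {K : Set (EuclideanSpace ℝ (Fin n))} (hKconv : Convex ℝ K)
    {p : EuclideanSpace ℝ (Fin n)} (hp : p ∈ K) {lam : ℝ} (h0 : 0 ≤ lam) (h1 : lam ≤ 1) :
    AffineMap.homothety p lam '' K ⊆ K := by
  rintro _ ⟨x, hx, rfl⟩
  have : AffineMap.homothety p lam x = lam • x + (1 - lam) • p := by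
    simp [AffineMap.homothety_apply, smul_sub, sub_smul]
    abel
  rw [this]
  exact hKconv hx hp h0 (by linarith) (by ring)

lemma homothety_volume (K : Set (EuclideanSpace ℝ (Fin n)))
    (p : EuclideanSpace ℝ (Fin n)) {lam : ℝ} (h0 : 0 ≤ lam) :
    volume (AffineMap.homothety p lam '' K) = ENNReal.ofReal (lam ^ n) * volume K := by
  rw [Measure.addHaar_image_homothety, finrank_euclideanSpace_fin, abs_of_nonneg (pow_nonneg h0 n)]

lemma homothety_apply_lin (φ : EuclideanSpace ℝ (Fin n) →ₗ[ℝ] ℝ)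
    (p x : EuclideanSpace ℝ (Fin n)) (lam : ℝ) :
    φ (AffineMap.homothety p lam x) = φ p + lam * (φ x - φ p) := by
  have : AffineMap.homothety p lam x = p + lam • (x - p) := by
    simp [AffineMap.homothety_apply]
    abel
  rw [this, map_add, LinearMap.map_smul, map_sub, smul_eq_mul]

lemma linear_zero_of_ball {φ : EuclideanSpace ℝ (Fin n) →ₗ[ℝ] ℝ}
    {x₀ : EuclideanSpace ℝ (Fin n)} {ε : ℝ} (hε : 0 < ε)
    (h : ∀ z ∈ ball x₀ ε, φ z = 0) : φ = 0 := by
  ext v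
  rcases eq_or_ne v 0 with rfl | hv
  · simp
  · have hnv : 0 < ‖v‖ := norm_pos_iff.2 hv
    set c : ℝ := ε / (2 * ‖v‖) with hc
    have hcpos : 0 < c := by positivity
    have hz : x₀ + c • v ∈ ball x₀ ε := by
      rw [mem_ball_iff_norm]
      simp only [add_sub_cancel_left]
      rw [norm_smul]
      simp only [Real.norm_eq_abs, abs_of_pos hcpos]
      rw [hc]
      rw [div_mul_eq_mul_div]
      rw [div_lt_iff₀ (by positivity)]
      nlinarith
    have h1 := h _ hz
    have h0 : φ x₀ = 0 := h x₀ (mem_ball_self hε)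
    rw [map_add, LinearMap.map_smul, h0, zero_add, smul_eq_mul] at h1
    have := mul_eq_zero.1 h1
    rcases this with h' | h'
    · exact absurd h' hcpos.ne'
    · simp only [LinearMap.zero_apply]
      exact h'

lemma volK_pos (hKcomp : IsCompact K) (hKint : (interior K).Nonempty) :
    0 < (volume K).toReal := by
  have h1 : 0 < volume K := Measure.measure_pos_of_nonempty_interior _ hKint
  exact ENNReal.toReal_pos h1.ne' hKcomp.measure_lt_top.ne

lemma volK_lt_top (hKcomp : IsCompact K) : volume K < ⊤ := hKcomp.measure_lt_top

lemma intK_phi (hKcomp : IsCompact K) (φ : EuclideanSpace ℝ (Fin n) →ₗ[ℝ] ℝ) :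
    IntegrableOn (fun y => φ y) K volume :=
  (φ.continuous_of_finiteDimensional.continuousOn).integrableOn_compact hKcomp

lemma intK_phi_sq (hKcomp : IsCompact K) (φ : EuclideanSpace ℝ (Fin n) →ₗ[ℝ] ℝ) :
    IntegrableOn (fun y => (φ y) ^ 2 ) K volume :=
  ((φ.continuous_of_finiteDimensional.pow 2).continuousOn).integrableOn_compact hKcomp

lemma int_phi_zero (hKcomp : IsCompact K) (hKint : (interior K).Nonempty)
    (hKcent : centroid K = 0) (φ : EuclideanSpace ℝ (Fin n) →ₗ[ℝ] ℝ) :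
    ∫ x in K, φ x = 0 := by
  have hV : (volume K).toReal ≠ 0 := (volK_pos hKcomp hKint).ne'
  have hC : (∫ x in K, x : EuclideanSpace ℝ (Fin n)) = 0 := by
    have := hKcent
    unfold centroid at this
    rcases smul_eq_zero.1 this with h | h
    · exact absurd (inv_eq_zero.1 h) hV
    · exact h
  have hint : IntegrableOn (fun x => x) K volume :=
    continuous_id.continuousOn.integrableOn_compact hKcomp
  set L := LinearMap.toContinuousLinearMap φ
  have : ∫ x in K, φ x = L (∫ x in K, x) := by
    rw [← ContinuousLinearMap.integral_comp_comm L hint]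
    rfl
  rw [this, hC, map_zero]

lemma max_pos (hKcomp : IsCompact K) (hKint : (interior K).Nonempty)
    (hKcent : centroid K = 0) {φ : EuclideanSpace ℝ (Fin n) →ₗ[ℝ] ℝ} (hφ : φ ≠ 0)
    {p : EuclideanSpace ℝ (Fin n)} (hp : p ∈ K) (hub : ∀ y ∈ K, φ y ≤ φ p) :
    0 < φ p := by
  by_contra hcon
  push_neg at hcon
  -- φ ≤ 0 on K, with zero integral, hence φ = 0 a.e. on K
  have hneg : ∀ y ∈ K, 0 ≤ -φ y := fun y hy => by
    have := (hub y hy).trans hcon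
    linarith
  have hint : ∫ x in K, (-φ x) = 0 := by
    rw [integral_neg, int_phi_zero hKcomp hKint hKcent φ, neg_zero]
  have hae : (fun x => -φ x) =ᵐ[volume.restrict K] 0 := by
    rw [← integral_eq_zero_iff_of_nonneg_ae
      (ae_restrict_of_forall_mem hKcomp.measurableSet hneg)
      ((intK_phi hKcomp φ).neg)]
    exact hint
  -- the set where φ ≠ 0, intersected with interior K, is open and null, hence empty
  have hNmeas : MeasurableSet {x : EuclideanSpace ℝ (Fin n) | φ x ≠ 0} :=
    (measurableSet_eq_fun (φ.continuous_of_finiteDimensional.measurable)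
      measurable_const).compl
  have hnull : volume ({x | φ x ≠ 0} ∩ K) = 0 := by
    have h2 : (volume.restrict K) {x | φ x ≠ 0} = 0 := by
      have := ae_iff.1 hae
      convert this using 2
      ext x
      simp
    rwa [Measure.restrict_apply hNmeas] at h2
  have hopen : IsOpen (interior K ∩ {x | φ x ≠ 0}) :=
    isOpen_interior.inter (isOpen_ne_fun φ.continuous_of_finiteDimensional continuous_const)
  have hempty : interior K ∩ {x | φ x ≠ 0} = ∅ := by
    rw [← hopen.measure_eq_zero_iff volume]
    refine measure_mono_null ?_ hnull
    intro x hx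
    exact ⟨hx.2, interior_subset hx.1⟩
  -- hence φ vanishes on a ball inside interior K
  obtain ⟨x₀, hx₀⟩ := hKint
  obtain ⟨ε, hε, hball⟩ := Metric.isOpen_iff.1 isOpen_interior x₀ hx₀
  have : ∀ z ∈ ball x₀ ε, φ z = 0 := by
    intro z hz
    by_contra hzne
    exact absurd (mem_inter (hball hz) hzne) (by rw [hempty]; exact notMem_empty z)
  exact hφ (linear_zero_of_ball hε this)

lemma moment_lb (hKcomp : IsCompact K) (hKconv : Convex ℝ K)
    {φ : EuclideanSpace ℝ (Fin n) →ₗ[ℝ] ℝ} {p : EuclideanSpace ℝ (Fin n)}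
    (hp : p ∈ K) (hub : ∀ y ∈ K, |φ y| ≤ φ p) :
    (φ p)^2 * (volume K).toReal * ((1/4:ℝ)^n * (1/4)) ≤ ∫ y in K, (φ y)^2 := by
  have hp0 : 0 ≤ φ p := (abs_nonneg _).trans (hub p hp)
  set T := AffineMap.homothety p (1/4:ℝ) '' K with hT
  have hTK : T ⊆ K := homothety_image_subset hKconv hp (by norm_num) (by norm_num)
  have hTcomp : IsCompact T := hKcomp.image (AffineMap.homothety_continuous p (1/4:ℝ))
  have hTmeas : MeasurableSet T := hTcomp.measurableSet
  have hvolT : volume T = ENNReal.ofReal ((1/4:ℝ) ^ n) * volume K :=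
    homothety_volume K p (by norm_num)
  have hT_lb : ∀ y ∈ T, φ p / 2 ≤ φ y := by
    rintro y ⟨x, hx, rfl⟩
    rw [homothety_apply_lin]
    have := (abs_le.1 (hub x hx)).1
    linarith
  have hT_sq : ∀ y ∈ T, (φ p / 2)^2 ≤ (φ y)^2 := fun y hy =>
    pow_le_pow_left₀ (by linarith [hT_lb y hy, hp0]) (hT_lb y hy) 2
  have hvolTtoReal : (volume T).toReal = (1/4:ℝ)^n * (volume K).toReal := by
    rw [hvolT, ENNReal.toReal_mul, ENNReal.toReal_ofReal (by positivity)]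
  have step1 : ∫ y in T, (φ p / 2)^2 ≤ ∫ y in T, (φ y)^2 := by
    refine setIntegral_mono_on (integrableOn_const ?_)
      ((intK_phi_sq hKcomp φ).mono_set hTK) hTmeas hT_sq
    exact (lt_of_le_of_lt (measure_mono hTK) hKcomp.measure_lt_top).ne
  have step2 : ∫ y in T, (φ y)^2 ≤ ∫ y in K, (φ y)^2 :=
    setIntegral_mono_set (intK_phi_sq hKcomp φ)
      (Filter.Eventually.of_forall (fun y => sq_nonneg _))
      (HasSubset.Subset.eventuallyLE hTK)
  have step0 : ∫ y in T, ((φ p / 2)^2 : ℝ) = (φ p / 2)^2 * (volume T).toReal := by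
    rw [setIntegral_const, smul_eq_mul, mul_comm]; rfl
  calc (φ p)^2 * (volume K).toReal * ((1/4:ℝ)^n * (1/4))
      ≤ (φ p / 2)^2 * (volume T).toReal := by
        rw [hvolTtoReal]
        exact le_of_eq (by ring)
    _ = ∫ y in T, ((φ p / 2)^2 : ℝ) := step0.symm
    _ ≤ ∫ y in T, (φ y)^2 := step1
    _ ≤ ∫ y in K, (φ y)^2 := step2

lemma moment_ub (hn : 1 ≤ n) (hKcomp : IsCompact K) (hKconv : Convex ℝ K)
    (hKint : (interior K).Nonempty) (hKcent : centroid K = 0)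
    {φ : EuclideanSpace ℝ (Fin n) →ₗ[ℝ] ℝ} {p q : EuclideanSpace ℝ (Fin n)}
    (hp : p ∈ K) (hq : q ∈ K) (hM : ∀ y ∈ K, φ y ≤ φ p) (hm : ∀ y ∈ K, φ q ≤ φ y)
    (hMpos : 0 < φ p) (hmpos : φ q < 0) :
    ∫ y in K, (φ y)^2 ≤ n * (φ p)^2 * (volume K).toReal := by
  set M : ℝ := φ p with hMdef
  set m : ℝ := -φ q with hmdef
  have hm0 : 0 < m := by simp [hmdef]; linarith
  have hMm : 0 < M + m := by linarith
  set lam : ℝ := m / (M + m) with hlam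
  have hlam0 : 0 ≤ lam := by positivity
  have hlam1 : lam ≤ 1 := by
    rw [hlam, div_le_one hMm]; linarith
  have hφc : Continuous φ := φ.continuous_of_finiteDimensional
  set Sp : Set (EuclideanSpace ℝ (Fin n)) := K ∩ {x | 0 < φ x} with hSp
  set Sm : Set (EuclideanSpace ℝ (Fin n)) := K ∩ {x | φ x ≤ 0} with hSm
  have hSpmeas : MeasurableSet Sp :=
    hKcomp.measurableSet.inter (measurableSet_lt measurable_const hφc.measurable)
  have hSmmeas : MeasurableSet Sm :=
    hKcomp.measurableSet.inter (measurableSet_le hφc.measurable measurable_const)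
  have hdisj : Disjoint Sp Sm := by
    rw [Set.disjoint_left]
    rintro x ⟨_, hx1⟩ ⟨_, hx2⟩
    simp only [mem_setOf_eq] at hx1 hx2
    linarith
  have hunion : Sp ∪ Sm = K := by
    ext x
    constructor
    · rintro (⟨h, _⟩ | ⟨h, _⟩) <;> exact h
    · intro hx
      rcases lt_or_ge 0 (φ x) with h | h
      · exact Or.inl ⟨hx, h⟩
      · exact Or.inr ⟨hx, h⟩
  have hIφp : IntegrableOn (fun y => φ y) Sp volume :=
    (intK_phi hKcomp φ).mono_set inter_subset_left
  have hIφm : IntegrableOn (fun y => φ y) Sm volume :=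
    (intK_phi hKcomp φ).mono_set inter_subset_left
  have hIφ2p : IntegrableOn (fun y => (φ y)^2) Sp volume :=
    (intK_phi_sq hKcomp φ).mono_set inter_subset_left
  have hIφ2m : IntegrableOn (fun y => (φ y)^2) Sm volume :=
    (intK_phi_sq hKcomp φ).mono_set inter_subset_left
  set I : ℝ := ∫ x in Sp, φ x with hI
  have hsplit : I + ∫ x in Sm, φ x = 0 := by
    rw [hI, ← setIntegral_union hdisj hSmmeas hIφp hIφm, hunion,
      int_phi_zero hKcomp hKint hKcent φ]
  have hIm : ∫ x in Sm, φ x = -I := by linarith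
  have hsplit2 : ∫ y in K, (φ y)^2 = (∫ x in Sp, (φ x)^2) + ∫ x in Sm, (φ x)^2 := by
    rw [← setIntegral_union hdisj hSmmeas hIφ2p hIφ2m, hunion]
  have h1 : ∫ x in Sp, (φ x)^2 ≤ M * I := by
    have hmono : ∫ x in Sp, (φ x)^2 ≤ ∫ x in Sp, M * φ x := by
      refine setIntegral_mono_on hIφ2p (hIφp.const_mul M) hSpmeas ?_
      rintro x ⟨hxK, hx⟩
      have h := hM x hxK
      simp only [mem_setOf_eq] at hx
      nlinarith
    rw [integral_const_mul] at hmono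
    exact hmono
  have h2 : ∫ x in Sm, (φ x)^2 ≤ m * I := by
    have hmono : ∫ x in Sm, (φ x)^2 ≤ ∫ x in Sm, m * (-φ x) := by
      refine setIntegral_mono_on hIφ2m ((hIφm.neg).const_mul m) hSmmeas ?_
      rintro x ⟨hxK, hx⟩
      have h := hm x hxK
      simp only [mem_setOf_eq] at hx
      nlinarith
    rw [integral_const_mul, integral_neg, hIm, neg_neg] at hmono
    exact hmono
  have h3 : I ≤ M * (volume Sp).toReal := by
    have hmono : ∫ x in Sp, φ x ≤ ∫ _x in Sp, M := by
      refine setIntegral_mono_on hIφp (integrableOn_const ?_) hSpmeas ?_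
      · exact (lt_of_le_of_lt (measure_mono inter_subset_left) hKcomp.measure_lt_top).ne
      · rintro x ⟨hxK, _⟩
        exact hM x hxK
    rw [setIntegral_const, smul_eq_mul] at hmono
    exact hmono.trans (le_of_eq (mul_comm _ _))
  have h4 : lam^n * (volume K).toReal ≤ (volume Sm).toReal := by
    set T := AffineMap.homothety q lam '' K with hT
    have hTSm : T ⊆ Sm := by
      rintro _ ⟨x, hx, rfl⟩
      refine ⟨homothety_image_subset hKconv hq hlam0 hlam1 ⟨x, hx, rfl⟩, ?_⟩
      simp only [mem_setOf_eq]
      rw [homothety_apply_lin]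
      have hle : φ x - φ q ≤ M + m := by
        have := hM x hx
        simp only [hmdef]
        linarith
      have : lam * (φ x - φ q) ≤ lam * (M + m) := mul_le_mul_of_nonneg_left hle hlam0
      have heq : lam * (M + m) = m := by
        rw [hlam]; field_simp
      linarith [this, heq]
    have hvolT : volume T = ENNReal.ofReal (lam ^ n) * volume K :=
      homothety_volume K q hlam0
    have : (volume T).toReal ≤ (volume Sm).toReal := by
      refine ENNReal.toReal_le_toReal ?_ ?_ |>.2 (measure_mono hTSm)
      · rw [hvolT]
        exact ENNReal.mul_ne_top ENNReal.ofReal_ne_top hKcomp.measure_lt_top.ne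
      · exact (lt_of_le_of_lt (measure_mono inter_subset_left) hKcomp.measure_lt_top).ne
    rwa [hvolT, ENNReal.toReal_mul, ENNReal.toReal_ofReal (by positivity)] at this
  have h5 : (volume Sp).toReal + (volume Sm).toReal = (volume K).toReal := by
    rw [← ENNReal.toReal_add
      (lt_of_le_of_lt (measure_mono inter_subset_left) hKcomp.measure_lt_top).ne
      (lt_of_le_of_lt (measure_mono inter_subset_left) hKcomp.measure_lt_top).ne,
      ← measure_union hdisj hSmmeas, hunion]
  -- assemble
  obtain ⟨k, rfl⟩ : ∃ k, n = k + 1 := ⟨n - 1, (Nat.succ_pred_eq_of_pos hn).symm⟩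
  have halg := aux_alg k hMpos hm0
  set V : ℝ := (volume K).toReal with hV
  have hVSp : (volume Sp).toReal = V - (volume Sm).toReal := by linarith
  have hI0 : ∫ y in K, (φ y)^2 ≤ (M + m) * I := by
    rw [hsplit2]; nlinarith [h1, h2]
  have hstep : (M + m) * I ≤ (M + m) * (M * (volume Sp).toReal) :=
    mul_le_mul_of_nonneg_left h3 hMm.le
  have hstep2 : (M + m) * (M * (volume Sp).toReal)
      ≤ (M + m) * (M * (V - lam^(k+1) * V)) := by
    have : V - (volume Sm).toReal ≤ V - lam^(k+1) * V := by linarith [h4]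
    have h' : M * (volume Sp).toReal ≤ M * (V - lam^(k+1) * V) := by
      rw [hVSp]
      exact mul_le_mul_of_nonneg_left this hMpos.le
    exact mul_le_mul_of_nonneg_left h' hMm.le
  have hVnn : 0 ≤ V := ENNReal.toReal_nonneg
  have hfin : (M + m) * (M * (V - lam^(k+1) * V)) ≤ (↑(k+1)) * M^2 * V := by
    have e1 : (M + m) * (M * (V - lam^(k+1) * V)) = ((M+m) * (1 - lam^(k+1))) * (M * V) := by
      ring
    have e2 : (↑(k+1) : ℝ) * M^2 * V = ((↑(k+1) : ℝ) * M) * (M * V) := by ring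
    rw [e1, e2]
    have : (0:ℝ) ≤ M * V := by positivity
    exact mul_le_mul_of_nonneg_right (by exact_mod_cast halg) this
  calc ∫ y in K, (φ y)^2 ≤ (M + m) * I := hI0
    _ ≤ (M + m) * (M * (volume Sp).toReal) := hstep
    _ ≤ (M + m) * (M * (V - lam^(k+1) * V)) := hstep2
    _ ≤ (↑(k+1)) * M^2 * V := hfin

lemma moments (hn : 1 ≤ n) (hKcomp : IsCompact K) (hKconv : Convex ℝ K)
    (hKint : (interior K).Nonempty) (hKcent : centroid K = 0)
    {φ : EuclideanSpace ℝ (Fin n) →ₗ[ℝ] ℝ} (hφ : φ ≠ 0) :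
    ∃ M : ℝ, 0 < M ∧ (∃ p ∈ K, φ p = M) ∧ (∀ y ∈ K, φ y ≤ M) ∧
      M^2 * (volume K).toReal * ((1/4:ℝ)^n * (1/4)) ≤ (∫ y in K, (φ y)^2) ∧
      (∫ y in K, (φ y)^2) ≤ n * M^2 * (volume K).toReal := by
  have hφc : Continuous φ := φ.continuous_of_finiteDimensional
  obtain ⟨x₀, hx₀⟩ := hKint
  have hKne : K.Nonempty := ⟨x₀, interior_subset hx₀⟩
  obtain ⟨p, hp, hpmax'⟩ := hKcomp.exists_isMaxOn hKne hφc.continuousOn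
  obtain ⟨q, hq, hqmin'⟩ := hKcomp.exists_isMinOn hKne hφc.continuousOn
  have hpmax : ∀ y ∈ K, φ y ≤ φ p := fun y hy => hpmax' hy
  have hqmin : ∀ y ∈ K, φ q ≤ φ y := fun y hy => hqmin' hy
  have hMpos : 0 < φ p := max_pos hKcomp ⟨x₀, hx₀⟩ hKcent hφ hp hpmax
  have hφneg : (-φ : EuclideanSpace ℝ (Fin n) →ₗ[ℝ] ℝ) ≠ 0 := by
    simpa [neg_eq_zero] using hφ
  have hmneg : 0 < (-φ) q := by
    refine max_pos hKcomp ⟨x₀, hx₀⟩ hKcent hφneg hq ?_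
    intro y hy
    simp only [LinearMap.neg_apply, neg_le_neg_iff]
    exact hqmin y hy
  simp only [LinearMap.neg_apply] at hmneg
  have hqneg : φ q < 0 := by linarith
  refine ⟨φ p, hMpos, ⟨p, hp, rfl⟩, hpmax, ?_, ?_⟩
  · -- lower bound on second moment
    by_cases hcase : -φ q ≤ φ p
    · refine le_trans (le_of_eq rfl) (moment_lb hKcomp hKconv hp ?_)
      intro y hy
      rw [abs_le]
      exact ⟨by linarith [hqmin y hy], hpmax y hy⟩
    · push_neg at hcase
      have hlb := moment_lb hKcomp hKconv (φ := -φ) hq ?_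
      · simp only [LinearMap.neg_apply, neg_sq] at hlb
        refine le_trans ?_ hlb
        have h1 : (φ p)^2 ≤ (φ q)^2 := by nlinarith
        have h2 : (0:ℝ) ≤ (volume K).toReal * ((1/4:ℝ)^n * (1/4)) := by positivity
        calc (φ p)^2 * (volume K).toReal * ((1/4:ℝ)^n * (1/4))
            = (φ p)^2 * ((volume K).toReal * ((1/4:ℝ)^n * (1/4))) := by ring
          _ ≤ (φ q)^2 * ((volume K).toReal * ((1/4:ℝ)^n * (1/4))) :=
              mul_le_mul_of_nonneg_right h1 h2
          _ = (φ q)^2 * (volume K).toReal * ((1/4:ℝ)^n * (1/4)) := by ring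
      · intro y hy
        simp only [LinearMap.neg_apply]
        rw [abs_le]
        constructor
        · have := hpmax y hy
          linarith
        · have := hqmin y hy
          linarith
  · exact moment_ub hn hKcomp hKconv ⟨x₀, hx₀⟩ hKcent hp hq hpmax hqmin hMpos hqneg

lemma ncast_pos (hn : 1 ≤ n) : (0:ℝ) < n := by exact_mod_cast hn

lemma aConst_pos (hn : 1 ≤ n) : 0 < aConst n :=
  mul_pos (Real.rpow_pos_of_pos two_pos _) (Real.rpow_pos_of_pos (ncast_pos hn) _)

lemma bConst_pos (hn : 1 ≤ n) : 0 < bConst n :=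
  mul_pos (Real.rpow_pos_of_pos two_pos _) (Real.rpow_pos_of_pos (ncast_pos hn) _)

lemma rpow_sq {x : ℝ} (hx : 0 ≤ x) (e : ℝ) : (x^e)^2 = x^(2*e) := by
  rw [← Real.rpow_natCast (x^e) 2, ← Real.rpow_mul hx]
  norm_num [mul_comm]

lemma aConst_sq (hn : 1 ≤ n) :
    (aConst n)^2 = (2:ℝ)^(-(n:ℝ)-2) * (n:ℝ)^(-(3*(n:ℝ)/2)-3) := by
  unfold aConst
  rw [mul_pow, rpow_sq (by norm_num : (0:ℝ) ≤ 2), rpow_sq (Nat.cast_nonneg n)]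
  congr 1 <;> congr 1 <;> ring

lemma bConst_sq (hn : 1 ≤ n) :
    (bConst n)^2 = (2:ℝ)^((n:ℝ)+2) * (n:ℝ)^(3*(n:ℝ)/2+3) := by
  unfold bConst
  rw [mul_pow, rpow_sq (by norm_num : (0:ℝ) ≤ 2), rpow_sq (Nat.cast_nonneg n)]
  congr 1 <;> congr 1 <;> ring

lemma quarter_eq : (1/4:ℝ) = (2:ℝ)^(-2:ℝ) := by
  rw [show (-2:ℝ) = ((-2:ℤ):ℝ) by norm_num, Real.rpow_intCast]
  norm_num

lemma quarter_pow : ((1/4:ℝ))^n = (2:ℝ)^(-2*(n:ℝ)) := by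
  rw [quarter_eq, ← Real.rpow_natCast ((2:ℝ)^(-2:ℝ)) n, ← Real.rpow_mul (by norm_num)]

lemma key_b (hn : 1 ≤ n) :
    (2:ℝ)^((n:ℝ)) ≤ ((n:ℝ)+2) * (n:ℝ)^(3*(n:ℝ)/2+3) := by
  have hn1 : (1:ℝ) ≤ n := by exact_mod_cast hn
  by_cases h1 : n = 1
  · subst h1
    simp only [Nat.cast_one, Real.one_rpow, Real.rpow_one]
    norm_num
  · have h2 : (2:ℝ) ≤ n := by
      have : 2 ≤ n := by omega
      exact_mod_cast this
    calc (2:ℝ)^((n:ℝ)) ≤ (n:ℝ)^((n:ℝ)) :=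
          Real.rpow_le_rpow (by norm_num) h2 (Nat.cast_nonneg n)
      _ ≤ (n:ℝ)^(3*(n:ℝ)/2+3) :=
          Real.rpow_le_rpow_of_exponent_le hn1 (by linarith [Nat.cast_nonneg (α := ℝ) n])
      _ ≤ ((n:ℝ)+2) * (n:ℝ)^(3*(n:ℝ)/2+3) :=
          le_mul_of_one_le_left (Real.rpow_nonneg (Nat.cast_nonneg n) _) (by linarith)

lemma num_b (hn : 1 ≤ n) :
    1 ≤ ((n:ℝ)+2) * ((1/4:ℝ)^n * (1/4)) * (bConst n)^2 := by
  have e3 : ((1/4:ℝ))^n * (1/4) * (2:ℝ)^((n:ℝ)+2) = ((2:ℝ)^((n:ℝ)))⁻¹ := by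
    rw [quarter_pow, quarter_eq, ← Real.rpow_add two_pos, ← Real.rpow_add two_pos,
      ← Real.rpow_neg (by norm_num : (0:ℝ) ≤ 2)]
    congr 1
    ring
  have e4 : ((n:ℝ)+2) * ((1/4:ℝ)^n * (1/4)) * (bConst n)^2
      = (((n:ℝ)+2) * (n:ℝ)^(3*(n:ℝ)/2+3)) * ((2:ℝ)^((n:ℝ)))⁻¹ := by
    rw [bConst_sq hn, ← e3]
    ring
  rw [e4, ← div_eq_mul_inv, le_div_iff₀ (Real.rpow_pos_of_pos two_pos _), one_mul]
  exact key_b hn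

lemma num_a (hn : 1 ≤ n) :
    (aConst n)^2 * ((n:ℝ) * ((n:ℝ)+2)) ≤ 1 := by
  have hn1 : (1:ℝ) ≤ n := by exact_mod_cast hn
  have key : (n:ℝ) * ((n:ℝ)+2) ≤ (2:ℝ)^((n:ℝ)+2) * (n:ℝ)^(3*(n:ℝ)/2+3) := by
    have k1 : (n:ℝ) ≤ (n:ℝ)^(3*(n:ℝ)/2+3) := by
      nth_rewrite 1 [← Real.rpow_one (n:ℝ)]
      exact Real.rpow_le_rpow_of_exponent_le hn1 (by linarith)
    have k2 : (n:ℝ)+2 ≤ (2:ℝ)^((n:ℝ)+2) := by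
      have h := Nat.lt_two_pow_self (n := n+2)
      have h' : ((n+2:ℕ):ℝ) ≤ ((2^(n+2):ℕ):ℝ) := by exact_mod_cast h.le
      have h'' : ((2^(n+2):ℕ):ℝ) = (2:ℝ)^((n:ℝ)+2) := by
        push_cast
        rw [← Real.rpow_natCast (2:ℝ) (n+2)]
        push_cast
        ring_nf
      rw [h''] at h'
      calc (n:ℝ)+2 = ((n+2:ℕ):ℝ) := by push_cast; ring
        _ ≤ (2:ℝ)^((n:ℝ)+2) := h'
    calc (n:ℝ) * ((n:ℝ)+2) ≤ (n:ℝ)^(3*(n:ℝ)/2+3) * ((2:ℝ)^((n:ℝ)+2)) := by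
          exact mul_le_mul k1 k2 (by linarith) (Real.rpow_nonneg (Nat.cast_nonneg n) _)
      _ = (2:ℝ)^((n:ℝ)+2) * (n:ℝ)^(3*(n:ℝ)/2+3) := mul_comm _ _
  have e1 : (2:ℝ)^(-(n:ℝ)-2) = ((2:ℝ)^((n:ℝ)+2))⁻¹ := by
    rw [← Real.rpow_neg (by norm_num : (0:ℝ) ≤ 2)]
    congr 1
    ring
  have e2 : (n:ℝ)^(-(3*(n:ℝ)/2)-3) = ((n:ℝ)^(3*(n:ℝ)/2+3))⁻¹ := by
    rw [← Real.rpow_neg (Nat.cast_nonneg n)]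
    congr 1
    ring
  rw [aConst_sq hn, e1, e2, ← mul_inv, inv_mul_le_iff₀ (by positivity), mul_one]
  exact key

theorem stmt5 {n : ℕ} (K : Set (EuclideanSpace ℝ (Fin n)))
    (hKcomp : IsCompact K) (hKconv : Convex ℝ K) (hKint : (interior K).Nonempty)
    (hKcent : centroid K = 0) :
    aConst n • binetLegendre K ⊆ K ∧ K ⊆ bConst n • binetLegendre K := by
  obtain ⟨y₀, hy₀⟩ := id hKint
  have hy₀K : y₀ ∈ K := interior_subset hy₀
  rcases Nat.eq_zero_or_pos n with h0 | hn
  · -- degenerate case n = 0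
    subst h0
    have hsub : ∀ a b : EuclideanSpace ℝ (Fin 0), a = b := fun a b => by
      ext i; exact i.elim0
    have hBL : ∀ x : EuclideanSpace ℝ (Fin 0), x ∈ binetLegendre K := by
      intro x φ _
      have hx0 : φ x = 0 := by rw [hsub x 0, map_zero]
      rw [hx0]
      norm_num
    constructor
    · intro z hz
      have : z = y₀ := hsub z y₀
      rw [this]
      exact hy₀K
    · intro x _
      exact Set.mem_smul_set.2 ⟨x, hBL x, hsub _ _⟩
  · have hV := volK_pos hKcomp hKint
    constructor
    · -- lower inclusion : aConst n • BL ⊆ K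
      intro z hz
      rcases Set.mem_smul_set.1 hz with ⟨x, hxBL, rfl⟩
      by_contra hzK
      obtain ⟨f, u, hfu, huz⟩ :=
        geometric_hahn_banach_closed_point hKconv hKcomp.isClosed hzK
      by_cases hφ0 : f.toLinearMap = 0
      · have h1 : f y₀ = 0 := LinearMap.ext_iff.1 hφ0 y₀
        have h2 : f (aConst n • x) = 0 := LinearMap.ext_iff.1 hφ0 _
        have := hfu y₀ hy₀K
        rw [h1] at this
        rw [h2] at huz
        linarith
      · obtain ⟨M, hMpos, ⟨p, hp, hpM⟩, hub, _, hubm⟩ :=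
          moments hn hKcomp hKconv hKint hKcent hφ0
        set s : ℝ := Real.sqrt ((n:ℝ) * ((n:ℝ)+2)) with hs
        have hnn : (0:ℝ) ≤ (n:ℝ) * ((n:ℝ)+2) := by positivity
        have hspos : 0 < s := Real.sqrt_pos.2 (by
          have : (0:ℝ) < n := by exact_mod_cast hn
          nlinarith)
        set c : ℝ := s * M with hc
        have hcpos : 0 < c := mul_pos hspos hMpos
        have hc2 : c^2 = (n:ℝ) * ((n:ℝ)+2) * M^2 := by
          rw [hc, mul_pow, Real.sq_sqrt hnn]
        -- the quadratic form of φ is at most c²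
        have hQle : ((n:ℝ)+2) / (volume K).toReal * (∫ y in K, (f.toLinearMap y)^2) ≤ c^2 := by
          have h1 : ((n:ℝ)+2) / (volume K).toReal * (∫ y in K, (f.toLinearMap y)^2)
              ≤ ((n:ℝ)+2) / (volume K).toReal * ((n:ℝ) * M^2 * (volume K).toReal) :=
            mul_le_mul_of_nonneg_left hubm (by positivity)
          have h2 : ((n:ℝ)+2) / (volume K).toReal * ((n:ℝ) * M^2 * (volume K).toReal)
              = (n:ℝ) * ((n:ℝ)+2) * M^2 := by
            field_simp
          rw [h2] at h1
          rw [hc2]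
          exact h1
        -- hence φ x ≤ c by the Binet-Legendre condition
        have hφx : f x ≤ c := by
          set ψ : EuclideanSpace ℝ (Fin n) →ₗ[ℝ] ℝ := c⁻¹ • f.toLinearMap with hψ
          have hψval : ∀ y, ψ y = c⁻¹ * f y := fun y => rfl
          have hint : ∫ y in K, (ψ y)^2 = (c⁻¹)^2 * ∫ y in K, (f.toLinearMap y)^2 := by
            rw [← integral_const_mul]
            congr 1
            ext y
            rw [hψval y, ContinuousLinearMap.coe_coe]
            ring
          have hcond : ((n:ℝ)+2) / (volume K).toReal * ∫ y in K, (ψ y)^2 ≤ 1 := by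
            rw [hint]
            have : ((n:ℝ)+2) / (volume K).toReal * ((c⁻¹)^2 * ∫ y in K, (f.toLinearMap y)^2)
                = (c⁻¹)^2 * (((n:ℝ)+2) / (volume K).toReal * ∫ y in K, (f.toLinearMap y)^2) := by
              ring
            rw [this]
            calc (c⁻¹)^2 * (((n:ℝ)+2) / (volume K).toReal * ∫ y in K, (f.toLinearMap y)^2)
                ≤ (c⁻¹)^2 * c^2 := mul_le_mul_of_nonneg_left hQle (by positivity)
              _ = 1 := by
                  field_simp
          have := hxBL ψ hcond
          rw [hψval] at this
          calc f x = c * (c⁻¹ * f x) := by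
                field_simp
            _ ≤ c * 1 := mul_le_mul_of_nonneg_left this hcpos.le
            _ = c := mul_one c
        -- assemble the contradiction
        have has : aConst n * s ≤ 1 := by
          have h1 : (aConst n * s)^2 ≤ 1 := by
            have : (aConst n * s)^2 = (aConst n)^2 * ((n:ℝ) * ((n:ℝ)+2)) := by
              rw [mul_pow, Real.sq_sqrt hnn]
            rw [this]
            exact num_a hn
          nlinarith [mul_pos (aConst_pos hn) hspos]
        have hchain : f (aConst n • x) ≤ M := by
          have h1 : f (aConst n • x) = aConst n * f x := by
            rw [_root_.map_smul, smul_eq_mul]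
          rw [h1]
          calc aConst n * f x ≤ aConst n * c :=
                mul_le_mul_of_nonneg_left hφx (aConst_pos hn).le
            _ = (aConst n * s) * M := by rw [hc]; ring
            _ ≤ 1 * M := mul_le_mul_of_nonneg_right has hMpos.le
            _ = M := one_mul M
        have hMu : M < u := by
          have h6 := hfu p hp
          rw [ContinuousLinearMap.coe_coe] at hpM
          rw [hpM] at h6
          exact h6
        linarith
    · -- upper inclusion : K ⊆ bConst n • BL
      intro x hxK
      have hb := bConst_pos hn
      refine Set.mem_smul_set.2 ⟨(bConst n)⁻¹ • x, ?_, smul_inv_smul₀ hb.ne' x⟩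
      intro φ hQ
      by_cases hφ0 : φ = 0
      · rw [hφ0]
        norm_num
      · obtain ⟨M, hMpos, _, hub, hlb, _⟩ :=
          moments hn hKcomp hKconv hKint hKcent hφ0
        have hQ2 : (((n:ℝ)+2) * ((1/4:ℝ)^n * (1/4))) * M^2 ≤ 1 := by
          have h1 : ((n:ℝ)+2) / (volume K).toReal * (M^2 * (volume K).toReal * ((1/4:ℝ)^n * (1/4)))
              ≤ ((n:ℝ)+2) / (volume K).toReal * ∫ y in K, (φ y)^2 :=
            mul_le_mul_of_nonneg_left hlb (by positivity)
          have h2 : ((n:ℝ)+2) / (volume K).toReal * (M^2 * (volume K).toReal * ((1/4:ℝ)^n * (1/4)))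
              = (((n:ℝ)+2) * ((1/4:ℝ)^n * (1/4))) * M^2 := by
            field_simp
          rw [h2] at h1
          exact h1.trans hQ
        have hMb : M ≤ bConst n := by
          have hP : (0:ℝ) < ((n:ℝ)+2) * ((1/4:ℝ)^n * (1/4)) := by positivity
          have h3 : (((n:ℝ)+2) * ((1/4:ℝ)^n * (1/4))) * M^2
              ≤ (((n:ℝ)+2) * ((1/4:ℝ)^n * (1/4))) * (bConst n)^2 := by
            calc (((n:ℝ)+2) * ((1/4:ℝ)^n * (1/4))) * M^2 ≤ 1 := hQ2
              _ ≤ _ := num_b hn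
          have h4 : M^2 ≤ (bConst n)^2 := le_of_mul_le_mul_left h3 hP
          nlinarith
        have h5 : φ ((bConst n)⁻¹ • x) = (bConst n)⁻¹ * φ x := by
          rw [LinearMap.map_smul, smul_eq_mul]
        rw [h5]
        calc (bConst n)⁻¹ * φ x ≤ (bConst n)⁻¹ * bConst n := by
              refine mul_le_mul_of_nonneg_left ?_ (by positivity)
              exact (hub x hxK).trans hMb
          _ = 1 := inv_mul_cancel₀ hb.ne'
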